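/- Let $v_1,\ldots,v_n$ be nonzero vectors in $\mathbb{R}^d$ with $\|v_i\|_2 \le 1$, let $\varepsilon_1,\ldots,\varepsilon_n$ be independent Rademacher random variables, and let $x \in \mathbb{R}^d$ be nonzero with $k = \lceil \|x\|_2 \rceil$. Then $\mathbb{P}(v_1\varepsilon_1 + \cdots + v_n\varepsilon_n = x) \le \binom{n}{\lceil (n+k)/2 \rceil}/2^n$. -/

import Mathlib

open MeasureTheory ProbabilityTheory

/-- A Rademacher random variable takes values `1` and `-1` each with probability `1/2`. -/
def IsRademacher {Ω : Type*} [MeasurableSpace Ω] (μ : Measure Ω) (f : Ω → ℝ) : Prop :=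
  μ {ω | f ω = 1} = 1 / 2 ∧ μ {ω | f ω = -1} = 1 / 2

open Finset
open scoped FinsetFamily RealInnerProductSpace

namespace LO

def Inter (t : ℕ) (F : Finset (Finset ℕ)) : Prop :=
  ∀ A ∈ F, ∀ B ∈ F, t ≤ #(A ∩ B)
def Bdd (n : ℕ) (F : Finset (Finset ℕ)) : Prop := ∀ A ∈ F, A ⊆ range n
def Szd (r : ℕ) (F : Finset (Finset ℕ)) : Prop := ∀ A ∈ F, #A = r
def Shifted (n : ℕ) (H : Finset (Finset ℕ)) : Prop :=
  ∀ i j, i < j → j < n → UV.IsCompressed {i} {j} H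
def fmeasure (H : Finset (Finset ℕ)) : ℕ := ∑ A ∈ H, ∑ a ∈ A, 2 ^ a

lemma Bdd.shadow {n : ℕ} {H : Finset (Finset ℕ)} (hB : Bdd n H) : Bdd n (Finset.shadow H) := by
  intro B hB'
  obtain ⟨A, hA, hBA⟩ := Finset.exists_subset_of_mem_shadow hB'
  exact hBA.trans (hB A hA)

lemma localLYM {n r : ℕ} {H : Finset (Finset ℕ)} (hB : Bdd n H) (hr : Szd r H)
    (h2r : n + 1 ≤ 2 * r) : #H ≤ #(Finset.shadow H) := by
  classical
  have hr' : 0 < r := by omega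
  have hshadow : ∀ B ∈ Finset.shadow H, #B = r - 1 := by
    intro B hB'
    exact Set.Sized.shadow (fun A hA => hr A hA) hB'
  have key : #H * r ≤ #(Finset.shadow H) * (n - r + 1) := by
    apply card_mul_le_card_mul (fun A B => B ⊆ A)
    · intro A hA
      have : A.image A.erase ⊆ (Finset.shadow H).bipartiteAbove (fun A B => B ⊆ A) A := by
        intro B hBim
        obtain ⟨x, hx, rfl⟩ := mem_image.1 hBim
        exact mem_filter.2 ⟨erase_mem_shadow hA hx, erase_subset _ _⟩
      calc r = #A := (hr A hA).symm
        _ = #(A.image A.erase) := (card_image_of_injOn (A.erase_injOn)).symm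
        _ ≤ _ := card_le_card this
    · intro B hB'
      have hsub : H.bipartiteBelow (fun A B => B ⊆ A) B ⊆
          (range n \ B).image (fun x => insert x B) := by
        intro A hA
        rw [mem_bipartiteBelow] at hA
        obtain ⟨hAH, hBA⟩ := hA
        have hcard : #(A \ B) = 1 := by
          rw [card_sdiff_of_subset hBA, hr A hAH, hshadow B hB']
          omega
        obtain ⟨x, hx⟩ := card_eq_one.1 hcard
        have hxA : x ∈ A \ B := hx ▸ mem_singleton_self x
        rw [mem_sdiff] at hxA
        refine mem_image.2 ⟨x, ?_, ?_⟩
        · exact mem_sdiff.2 ⟨hB A hAH hxA.1, hxA.2⟩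
        · apply Subset.antisymm
          · intro y hy
            rcases mem_insert.1 hy with rfl | hyB
            · exact hxA.1
            · exact hBA hyB
          · intro y hy
            by_cases hyB : y ∈ B
            · exact mem_insert_of_mem hyB
            · have : y ∈ A \ B := mem_sdiff.2 ⟨hy, hyB⟩
              rw [hx, mem_singleton] at this
              exact this ▸ mem_insert_self x B
      calc #(H.bipartiteBelow (fun A B => B ⊆ A) B) ≤ #((range n \ B).image (fun x => insert x B)) :=
            card_le_card hsub
        _ ≤ #(range n \ B) := card_image_le
        _ ≤ n - r + 1 := by
            have h1 : #(range n \ B) = n - #B := by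
              rw [card_sdiff_of_subset (Bdd.shadow hB B hB'), card_range]
            have h2 : #B = r - 1 := hshadow B hB'
            have h3 : #B ≤ n := by simpa using card_le_card (Bdd.shadow hB B hB')
            omega
  have h1 : #H * r ≤ #(Finset.shadow H) * r :=
    key.trans (Nat.mul_le_mul_left _ (by omega))
  exact Nat.le_of_mul_le_mul_right h1 hr'


lemma compress_of_new {i j : ℕ} {A : Finset ℕ} (hj : j ∈ A) (hi : i ∉ A) :
    UV.compress {i} {j} A = insert i (A.erase j) := by
  have hij : i ≠ j := fun h => hi (h ▸ hj)
  rw [UV.compress_of_disjoint_of_le (by simpa using hi) (by simpa using hj)]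
  ext y
  simp only [sup_eq_union, mem_sdiff, mem_union, mem_singleton, mem_insert, mem_erase]
  constructor
  · rintro ⟨hy | rfl, hyj⟩
    · exact Or.inr ⟨hyj, hy⟩
    · exact Or.inl rfl
  · rintro (rfl | ⟨hyj, hy⟩)
    · exact ⟨Or.inr rfl, hij⟩
    · exact ⟨Or.inl hy, hyj⟩

lemma new_spec {i j : ℕ} {H : Finset (Finset ℕ)} {A' : Finset ℕ}
    (h : A' ∈ UV.compression {i} {j} H) (hnot : A' ∉ H) :
    ∃ A ∈ H, j ∈ A ∧ i ∉ A ∧ A' = insert i (A.erase j) := by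
  rw [UV.mem_compression] at h
  rcases h with ⟨h1, _⟩ | ⟨_, A, hA, hcomp⟩
  · exact absurd h1 hnot
  · refine ⟨A, hA, ?_⟩
    by_cases hc : Disjoint ({i} : Finset ℕ) A ∧ ({j} : Finset ℕ) ≤ A
    · have hj : j ∈ A := by simpa using hc.2
      have hi : i ∉ A := by simpa using hc.1
      exact ⟨hj, hi, by rw [← hcomp, compress_of_new hj hi]⟩
    · exfalso
      apply hnot
      rw [← hcomp]
      unfold UV.compress
      rw [if_neg hc]
      exact hA

lemma inter_compression {i j t : ℕ} {H : Finset (Finset ℕ)} (hH : Inter t H) :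
    Inter t (UV.compression {i} {j} H) := by
  classical
  -- key asymmetric helper : A' is "new", B' is "old"
  have key : ∀ A B' : Finset ℕ, A ∈ H → B' ∈ H → UV.compress {i} {j} B' ∈ H →
      j ∈ A → i ∉ A → t ≤ #(insert i (A.erase j) ∩ B') := by
    intro A B' hA hB' hBc hj hi
    by_cases hjB : j ∈ B'
    · by_cases hiB : i ∈ B'
      · -- i ∈ B', j ∈ B'
        have hsub : insert i ((A ∩ B').erase j) ⊆ insert i (A.erase j) ∩ B' := by
          intro y hy
          rcases mem_insert.1 hy with rfl | hy'
          · exact mem_inter.2 ⟨mem_insert_self _ _, hiB⟩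
          · rw [mem_erase, mem_inter] at hy'
            exact mem_inter.2 ⟨mem_insert_of_mem (mem_erase.2 ⟨hy'.1, hy'.2.1⟩), hy'.2.2⟩
        have hcard : #(insert i ((A ∩ B').erase j)) = #(A ∩ B') := by
          rw [card_insert_of_notMem (fun h => hi (mem_inter.1 (mem_of_mem_erase h)).1),
            card_erase_of_mem (mem_inter.2 ⟨hj, hjB⟩)]
          have : 0 < #(A ∩ B') := card_pos.2 ⟨j, mem_inter.2 ⟨hj, hjB⟩⟩
          omega
        calc t ≤ #(A ∩ B') := hH A hA B' hB'
          _ = _ := hcard.symm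
          _ ≤ _ := card_le_card hsub
      · -- j ∈ B', i ∉ B' : use compressed B'
        rw [compress_of_new hjB hiB] at hBc
        have h1 : t ≤ #(A ∩ insert i (B'.erase j)) := hH A hA _ hBc
        have h2 : A ∩ insert i (B'.erase j) = (A ∩ B').erase j := by
          ext y
          simp only [mem_inter, mem_insert, mem_erase]
          constructor
          · rintro ⟨hyA, rfl | ⟨hyj, hyB⟩⟩
            · exact absurd hyA hi
            · exact ⟨hyj, hyA, hyB⟩
          · rintro ⟨hyj, hyA, hyB⟩
            exact ⟨hyA, Or.inr ⟨hyj, hyB⟩⟩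
        have h3 : (A ∩ B').erase j ⊆ insert i (A.erase j) ∩ B' := by
          intro y hy
          rw [mem_erase, mem_inter] at hy
          exact mem_inter.2 ⟨mem_insert_of_mem (mem_erase.2 ⟨hy.1, hy.2.1⟩), hy.2.2⟩
        rw [h2] at h1
        exact h1.trans (card_le_card h3)
    · -- j ∉ B'
      have h3 : A ∩ B' ⊆ insert i (A.erase j) ∩ B' := by
        intro y hy
        rw [mem_inter] at hy
        have : y ≠ j := fun h => hjB (h ▸ hy.2)
        exact mem_inter.2 ⟨mem_insert_of_mem (mem_erase.2 ⟨this, hy.1⟩), hy.2⟩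
      exact (hH A hA B' hB').trans (card_le_card h3)
  intro A' hA' B' hB'
  by_cases hAold : A' ∈ H
  · have hAc : UV.compress {i} {j} A' ∈ H := by
      rw [UV.mem_compression] at hA'
      rcases hA' with ⟨_, h⟩ | ⟨h, _⟩
      · exact h
      · exact absurd hAold h
    by_cases hBold : B' ∈ H
    · exact hH A' hAold B' hBold
    · obtain ⟨B, hB, hjB, hiB, rfl⟩ := new_spec hB' hBold
      rw [inter_comm]
      exact key B A' hB hAold hAc hjB hiB
  · obtain ⟨A, hA, hjA, hiA, rfl⟩ := new_spec hA' hAold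
    by_cases hBold : B' ∈ H
    · have hBc : UV.compress {i} {j} B' ∈ H := by
        rw [UV.mem_compression] at hB'
        rcases hB' with ⟨_, h⟩ | ⟨h, _⟩
        · exact h
        · exact absurd hBold h
      exact key A B' hA hBold hBc hjA hiA
    · obtain ⟨B, hB, hjB, hiB, rfl⟩ := new_spec hB' hBold
      have hident : insert i (A.erase j) ∩ insert i (B.erase j) = insert i ((A ∩ B).erase j) := by
        ext y
        simp only [mem_inter, mem_insert, mem_erase]
        tauto
      rw [hident]
      have hcard : #(insert i ((A ∩ B).erase j)) = #(A ∩ B) := by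
        rw [card_insert_of_notMem (fun h => hiA (mem_inter.1 (mem_of_mem_erase h)).1),
          card_erase_of_mem (mem_inter.2 ⟨hjA, hjB⟩)]
        have : 0 < #(A ∩ B) := card_pos.2 ⟨j, mem_inter.2 ⟨hjA, hjB⟩⟩
        omega
      rw [hcard]
      exact hH A hA B hB


lemma fmeasure_compression_lt {i j : ℕ} (hij : i < j) {H : Finset (Finset ℕ)}
    (h : UV.compression {i} {j} H ≠ H) :
    fmeasure (UV.compression {i} {j} H) < fmeasure H := by
  classical
  set cp := UV.compress ({i} : Finset ℕ) {j} with hcp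
  set s1 := {a ∈ H | cp a ∈ H} with hs1
  set s2 := {a ∈ H.image cp | a ∉ H} with hs2
  set s3 := {a ∈ H | cp a ∉ H} with hs3
  have hcomp : UV.compression {i} {j} H = s1 ∪ s2 := rfl
  have hH13 : H = s1 ∪ s3 := by
    rw [hs1, hs3, filter_union_filter_not_eq]
  have hs23 : s2 = s3.image cp := by
    ext a
    simp only [hs2, hs3, mem_filter, mem_image]
    constructor
    · rintro ⟨⟨b, hb, rfl⟩, hnot⟩
      exact ⟨b, ⟨⟨hb, hnot⟩, rfl⟩⟩
    · rintro ⟨b, ⟨hb, hnot⟩, rfl⟩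
      exact ⟨⟨b, hb, rfl⟩, hnot⟩
  have hinj : Set.InjOn cp ↑s3 := UV.compress_injOn
  have hne : s3.Nonempty := by
    rcases s3.eq_empty_or_nonempty with he | hne
    · exfalso
      apply h
      rw [hcomp, hs23, he]
      simp only [image_empty, union_empty]
      rw [hH13, he, union_empty]
    · exact hne
  have hlt : ∀ b ∈ s3, ∑ a ∈ cp b, 2 ^ a < ∑ a ∈ b, 2 ^ a := by
    intro b hb
    rw [hs3, mem_filter] at hb
    have hne' : cp b ≠ b := fun hcb => hb.2 (by rw [hcb]; exact hb.1)
    by_cases hc : Disjoint ({i} : Finset ℕ) b ∧ ({j} : Finset ℕ) ≤ b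
    · have hjb : j ∈ b := by simpa using hc.2
      have hib : i ∉ b := by simpa using hc.1
      have : cp b = insert i (b.erase j) := compress_of_new hjb hib
      rw [this, sum_insert (fun hmem => hib (mem_of_mem_erase hmem))]
      have h1 : ∑ a ∈ b.erase j, 2 ^ a + 2 ^ j = ∑ a ∈ b, 2 ^ a :=
        Finset.sum_erase_add _ _ hjb
      have h2 : (2:ℕ) ^ i < 2 ^ j := Nat.pow_lt_pow_right one_lt_two hij
      omega
    · exfalso
      apply hne'
      rw [hcp]
      unfold UV.compress
      rw [if_neg hc]
  have hdisj13 : Disjoint s1 s3 := disjoint_filter_filter_not H H _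
  have hdisj12 : Disjoint s1 s2 := UV.compress_disjoint
  have e2 : fmeasure (UV.compression {i} {j} H) = ∑ A ∈ s1, ∑ a ∈ A, 2^a + ∑ A ∈ s2, ∑ a ∈ A, 2^a := by
    rw [hcomp, fmeasure, sum_union hdisj12]
  have e3 : fmeasure H = ∑ A ∈ s1, ∑ a ∈ A, 2^a + ∑ A ∈ s3, ∑ a ∈ A, 2^a := by
    rw [fmeasure, hH13, sum_union hdisj13]
  have e4 : ∑ A ∈ s2, ∑ a ∈ A, 2^a = ∑ A ∈ s3, ∑ a ∈ cp A, 2^a := by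
    rw [hs23, sum_image (fun x hx y hy hxy => hinj hx hy hxy)]
  have e5 : ∑ A ∈ s3, ∑ a ∈ cp A, 2^a < ∑ A ∈ s3, ∑ a ∈ A, 2^a :=
    sum_lt_sum_of_nonempty hne hlt
  omega

lemma exists_shifted {n r t : ℕ} : ∀ (N : ℕ) (H : Finset (Finset ℕ)), fmeasure H ≤ N →
    Bdd n H → Szd r H → Inter t H →
    ∃ H', Shifted n H' ∧ Bdd n H' ∧ Szd r H' ∧ Inter t H' ∧ #H' = #H ∧ #(Finset.shadow H') ≤ #(Finset.shadow H) := by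
  intro N
  induction N with
  | zero =>
    intro H hm hB hr hI
    by_cases hsh : Shifted n H
    · exact ⟨H, hsh, hB, hr, hI, rfl, le_rfl⟩
    · exfalso
      rw [Shifted] at hsh
      push_neg at hsh
      obtain ⟨i, j, hij, hjn, hnc⟩ := hsh
      have := fmeasure_compression_lt hij hnc
      omega
  | succ N ih =>
    intro H hm hB hr hI
    by_cases hsh : Shifted n H
    · exact ⟨H, hsh, hB, hr, hI, rfl, le_rfl⟩
    · rw [Shifted] at hsh
      push_neg at hsh
      obtain ⟨i, j, hij, hjn, hnc⟩ := hsh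
      have hlt := fmeasure_compression_lt hij hnc
      set H2 := UV.compression {i} {j} H with hH2
      have hB2 : Bdd n H2 := by
        intro A' hA'
        by_cases hold : A' ∈ H
        · exact hB A' hold
        · obtain ⟨A, hA, hjA, hiA, rfl⟩ := new_spec hA' hold
          intro y hy
          rcases mem_insert.1 hy with rfl | hy'
          · exact mem_range.2 (hij.trans hjn)
          · exact hB A hA (mem_of_mem_erase hy')
      have hr2 : Szd r H2 := by
        have : (↑H2 : Set (Finset ℕ)).Sized r := by
          rw [hH2]
          exact Set.Sized.uvCompression (by simp) (fun A hA => hr A hA)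
        exact fun A hA => this hA
      have hI2 : Inter t H2 := inter_compression hI
      have hsub : #(Finset.shadow H2) ≤ #(Finset.shadow H) := by
        apply UV.card_shadow_compression_le
        intro x hx
        refine ⟨j, mem_singleton_self j, ?_⟩
        rw [mem_singleton] at hx
        subst hx
        simp only [erase_singleton]
        exact UV.compression_self ∅ H
      obtain ⟨H', h1, h2, h3, h4, h5, h6⟩ := ih H2 (by omega) hB2 hr2 hI2
      exact ⟨H', h1, h2, h3, h4, by rw [h5, hH2, UV.card_compression], h6.trans hsub⟩


lemma compress_cases (i j : ℕ) (A : Finset ℕ) :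
    UV.compress {i} {j} A = A ∨ (j ∈ A ∧ i ∉ A ∧ UV.compress {i} {j} A = insert i (A.erase j)) := by
  by_cases hc : Disjoint ({i} : Finset ℕ) A ∧ ({j} : Finset ℕ) ≤ A
  · have hj : j ∈ A := by simpa using hc.2
    have hi : i ∉ A := by simpa using hc.1
    exact Or.inr ⟨hj, hi, compress_of_new hj hi⟩
  · left; unfold UV.compress; rw [if_neg hc]

lemma isCompressed_of_forall {u v : Finset ℕ} {s : Finset (Finset ℕ)}
    (h : ∀ a ∈ s, UV.compress u v a ∈ s) : UV.IsCompressed u v s := by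
  unfold UV.IsCompressed UV.compression
  have h1 : {a ∈ s | UV.compress u v a ∈ s} = s := filter_true_of_mem h
  have h2 : {a ∈ s.image (UV.compress u v) | a ∉ s} = ∅ := by
    rw [filter_eq_empty_iff]
    rintro a ha
    obtain ⟨b, hb, rfl⟩ := mem_image.1 ha
    simp only [not_not]
    exact h b hb
  rw [h1, h2, union_empty]

lemma mem_of_isCompressed {u v : Finset ℕ} {s : Finset (Finset ℕ)}
    (hs : UV.IsCompressed u v s) {a : Finset ℕ} (ha : a ∈ s) : UV.compress u v a ∈ s := by
  have := UV.compress_mem_compression (u := u) (v := v) ha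
  rwa [hs.eq] at this

theorem katona_shadow (n : ℕ) : ∀ (r t : ℕ) (H : Finset (Finset ℕ)), 1 ≤ t → 2 * r ≤ n + t →
    Bdd n H → Szd r H → Inter t H → #H ≤ #(Finset.shadow H) := by
  induction n with
  | zero =>
    intro r t H ht _ hB hr hI
    rcases H.eq_empty_or_nonempty with rfl | ⟨A, hA⟩
    · simp
    · exfalso
      have h1 : A ⊆ range 0 := hB A hA
      have h2 : t ≤ #(A ∩ A) := hI A hA A hA
      simp only [range_zero, subset_empty] at h1
      subst h1
      simp at h2
      omega
  | succ n ih =>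
    intro r t H ht h2r hB hr hI
    rcases H.eq_empty_or_nonempty with rfl | ⟨A₀, hA₀⟩
    · simp
    have hrt : t ≤ r := by
      have := hI A₀ hA₀ A₀ hA₀
      rwa [inter_self, hr A₀ hA₀] at this
    rcases eq_or_lt_of_le hrt with hrt' | hrt'
    · -- r = t : H is a singleton
      have hsingle : H = {A₀} := by
        apply Subset.antisymm
        · intro B hBm
          rw [mem_singleton]
          have h1 := hI A₀ hA₀ B hBm
          have h2 : A₀ ∩ B ⊆ A₀ := inter_subset_left
          have h3 : #A₀ ≤ #(A₀ ∩ B) := by rw [hr A₀ hA₀, ← hrt']; exact h1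
          have h4 : A₀ ∩ B = A₀ := (eq_of_subset_of_card_le h2 h3)
          have h5 : A₀ ⊆ B := by rw [← h4]; exact inter_subset_right
          exact (eq_of_subset_of_card_le h5 (by rw [hr A₀ hA₀, hr B hBm])).symm
        · intro B hBm
          rw [mem_singleton] at hBm
          subst hBm; exact hA₀
      have hA₀ne : A₀.Nonempty := by
        rw [← card_pos, hr A₀ hA₀]; omega
      obtain ⟨x, hx⟩ := hA₀ne
      rw [hsingle, card_singleton]
      exact card_pos.2 ⟨A₀.erase x, erase_mem_shadow (mem_singleton_self A₀) hx⟩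
    · -- t + 1 ≤ r
      by_cases hLYM : n + 2 ≤ 2 * r
      · exact localLYM hB hr hLYM
      · -- 2r ≤ n + 1, use shifting and trace
        have h2r' : 2 * r ≤ n + 1 := by omega
        obtain ⟨H', hsh, hB', hr', hI', hcard, hshad⟩ :=
          exists_shifted (n := n+1) (r := r) (t := t) (fmeasure H) H le_rfl hB hr hI
        set H0 := H'.filter (fun A => n ∉ A) with hH0
        set H1 := ((H'.filter (fun A => n ∈ A)).image (fun A => A.erase n)) with hH1
        -- cardinality split
        have hinj1 : Set.InjOn (fun A : Finset ℕ => A.erase n)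
            ((H'.filter (fun A => n ∈ A) : Finset (Finset ℕ)) : Set (Finset ℕ)) := by
          intro A hA B hBm hAB
          simp only [coe_filter, Set.mem_setOf_eq] at hA hBm
          simp only at hAB
          rw [← insert_erase hA.2, ← insert_erase hBm.2, hAB]
        have hcard1 : #H1 = #(H'.filter (fun A => n ∈ A)) := card_image_of_injOn hinj1
        have hsplit : #H' = #H0 + #H1 := by
          rw [hcard1, hH0]
          rw [add_comm]
          exact (card_filter_add_card_filter_not _).symm
        -- H0 properties
        have hB0 : Bdd n H0 := by
          intro A hA
          rw [hH0, mem_filter] at hA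
          intro y hy
          have := hB' A hA.1 hy
          rw [mem_range] at this ⊢
          rcases Nat.lt_succ_iff_lt_or_eq.1 this with h | rfl
          · exact h
          · exact absurd hy hA.2
        have hr0 : Szd r H0 := fun A hA => hr' A (mem_filter.1 hA).1
        have hI0 : Inter t H0 := fun A hA B hBm =>
          hI' A (mem_filter.1 hA).1 B (mem_filter.1 hBm).1
        -- H1 properties
        have hmem1 : ∀ B ∈ H1, ∃ A ∈ H', n ∈ A ∧ B = A.erase n := by
          intro B hBm
          rw [hH1] at hBm
          obtain ⟨A, hA, rfl⟩ := mem_image.1 hBm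
          rw [mem_filter] at hA
          exact ⟨A, hA.1, hA.2, rfl⟩
        have hB1 : Bdd n H1 := by
          intro B hBm
          obtain ⟨A, hA, hnA, rfl⟩ := hmem1 B hBm
          intro y hy
          rw [mem_erase] at hy
          have := hB' A hA hy.2
          rw [mem_range] at this ⊢
          omega
        have hr1 : Szd (r - 1) H1 := by
          intro B hBm
          obtain ⟨A, hA, hnA, rfl⟩ := hmem1 B hBm
          rw [card_erase_of_mem hnA, hr' A hA]
        have hI1 : Inter t H1 := by
          intro B1 hB1m B2 hB2m
          obtain ⟨A, hA, hnA, rfl⟩ := hmem1 B1 hB1m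
          obtain ⟨B, hBm, hnB, rfl⟩ := hmem1 B2 hB2m
          by_cases hABeq : A = B
          · subst hABeq
            rw [inter_self, card_erase_of_mem hnA, hr' A hA]
            omega
          · have hint := hI' A hA B hBm
            have hn_inter : n ∈ A ∩ B := mem_inter.2 ⟨hnA, hnB⟩
            have heq : (A.erase n) ∩ (B.erase n) = (A ∩ B).erase n := by
              ext y; simp only [mem_inter, mem_erase]; tauto
            rw [heq, card_erase_of_mem hn_inter]
            -- enough : t + 1 ≤ #(A ∩ B)
            rcases eq_or_lt_of_le hint with hexact | hgt
            · exfalso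
              -- find y outside A ∪ B
              have hcardU : #(A ∪ B) = 2 * r - t := by
                have := card_union_add_card_inter A B
                rw [hr' A hA, hr' B hBm, ← hexact] at this
                omega
              have hUsub : A ∪ B ⊆ range (n+1) := union_subset (hB' A hA) (hB' B hBm)
              have hUlt : #(A ∪ B) < n + 1 := by
                rw [hcardU]; omega
              have hssub : (range (n+1) \ (A ∪ B)).Nonempty := by
                rw [← card_pos, card_sdiff_of_subset hUsub, card_range]
                omega
              obtain ⟨y, hy⟩ := hssub
              rw [mem_sdiff, mem_union] at hy
              have hyn : y ≠ n := by
                rintro rfl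
                exact hy.2 (Or.inl hnA)
              have hylt : y < n := by
                have := mem_range.1 hy.1; omega
              -- swap n for y in B
              have hcomp := hsh y n hylt (Nat.lt_succ_self n)
              have hBswap : insert y (B.erase n) ∈ H' := by
                have := mem_of_isCompressed hcomp hBm
                rwa [compress_of_new hnB (fun h => hy.2 (Or.inr h))] at this
              have hint2 := hI' A hA _ hBswap
              have heq2 : A ∩ insert y (B.erase n) = (A ∩ B).erase n := by
                ext z
                simp only [mem_inter, mem_insert, mem_erase]
                constructor
                · rintro ⟨hzA, rfl | ⟨hzn, hzB⟩⟩
                  · exact absurd hzA (fun h => hy.2 (Or.inl h))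
                  · exact ⟨hzn, hzA, hzB⟩
                · rintro ⟨hzn, hzA, hzB⟩
                  exact ⟨hzA, Or.inr ⟨hzn, hzB⟩⟩
              rw [heq2, card_erase_of_mem hn_inter, ← hexact] at hint2
              omega
            · omega
        -- Shiftedness of H0 and H1
        have hsh0 : Shifted n H0 := by
          intro i j hij hjn
          apply isCompressed_of_forall
          intro A hA
          rw [hH0, mem_filter] at hA
          have hcA := mem_of_isCompressed (hsh i j hij (by omega)) hA.1
          rcases compress_cases i j A with he | ⟨hjA, hiA, he⟩
          · rw [he] at hcA ⊢
            exact mem_filter.2 hA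
          · rw [he] at hcA ⊢
            refine mem_filter.2 ⟨hcA, ?_⟩
            intro hmem
            rcases mem_insert.1 hmem with h | h
            · omega
            · exact hA.2 (mem_of_mem_erase h)
        have hsh1 : Shifted n H1 := by
          intro i j hij hjn
          apply isCompressed_of_forall
          intro B hBm
          obtain ⟨A, hA, hnA, rfl⟩ := hmem1 B hBm
          rcases compress_cases i j (A.erase n) with he | ⟨hjB, hiB, he⟩
          · rw [he]; exact hBm
          · rw [he]
            -- A itself compresses
            have hjA : j ∈ A := mem_of_mem_erase hjB
            have hiA : i ∉ A := by
              intro h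
              apply hiB
              exact mem_erase.2 ⟨by omega, h⟩
            have hcA := mem_of_isCompressed (hsh i j hij (by omega)) hA
            rw [compress_of_new hjA hiA] at hcA
            have hn_in : n ∈ insert i (A.erase j) := by
              refine mem_insert_of_mem (mem_erase.2 ⟨by omega, hnA⟩)
            rw [hH1]
            refine mem_image.2 ⟨insert i (A.erase j), mem_filter.2 ⟨hcA, hn_in⟩, ?_⟩
            -- (insert i (A.erase j)).erase n = insert i ((A.erase n).erase j)
            ext z
            simp only [mem_erase, mem_insert]
            constructor
            · rintro ⟨hzn, rfl | ⟨hzj, hzA⟩⟩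
              · exact Or.inl rfl
              · exact Or.inr ⟨hzj, hzn, hzA⟩
            · rintro (rfl | ⟨hzj, hzn, hzA⟩)
              · exact ⟨by omega, Or.inl rfl⟩
              · exact ⟨hzn, Or.inr ⟨hzj, hzA⟩⟩
        -- shadow split
        have hshadsplit : #(Finset.shadow H0) + #(Finset.shadow H1) ≤ #(Finset.shadow H') := by
          have hsub0 : Finset.shadow H0 ⊆ (Finset.shadow H').filter (fun B => n ∉ B) := by
            intro B hBm
            rw [mem_shadow_iff] at hBm
            obtain ⟨A, hA, x, hx, rfl⟩ := hBm
            rw [hH0, mem_filter] at hA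
            refine mem_filter.2 ⟨erase_mem_shadow hA.1 hx, fun h => hA.2 (mem_of_mem_erase h)⟩
          have hsub1 : (Finset.shadow H1).image (insert n) ⊆ (Finset.shadow H').filter (fun B => n ∈ B) := by
            intro C hC
            obtain ⟨S, hS, rfl⟩ := mem_image.1 hC
            rw [mem_shadow_iff] at hS
            obtain ⟨B, hBm, x, hx, rfl⟩ := hS
            obtain ⟨A, hA, hnA, rfl⟩ := hmem1 B hBm
            have hxn : x ≠ n := (mem_erase.1 hx).1
            have : insert n ((A.erase n).erase x) = A.erase x := by
              rw [erase_right_comm (a := n)]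
              exact insert_erase (mem_erase.2 ⟨(Ne.symm hxn), hnA⟩)
            rw [this]
            refine mem_filter.2 ⟨erase_mem_shadow hA (mem_of_mem_erase hx), ?_⟩
            exact mem_erase.2 ⟨Ne.symm hxn, hnA⟩
          have hinj : Set.InjOn (insert n) ((Finset.shadow H1 : Finset (Finset ℕ)) : Set (Finset ℕ)) := by
            intro S1 h1 S2 h2 he
            have hn1 : n ∉ S1 := by
              rw [mem_coe, mem_shadow_iff] at h1
              obtain ⟨B, hBm, x, hx, rfl⟩ := h1
              obtain ⟨A, hA, hnA, rfl⟩ := hmem1 B hBm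
              intro h
              exact absurd (mem_of_mem_erase h) (by simp)
            have hn2 : n ∉ S2 := by
              rw [mem_coe, mem_shadow_iff] at h2
              obtain ⟨B, hBm, x, hx, rfl⟩ := h2
              obtain ⟨A, hA, hnA, rfl⟩ := hmem1 B hBm
              intro h
              exact absurd (mem_of_mem_erase h) (by simp)
            rw [← erase_insert hn1, ← erase_insert hn2, he]
          calc #(Finset.shadow H0) + #(Finset.shadow H1)
              = #(Finset.shadow H0) + #((Finset.shadow H1).image (insert n)) := by rw [card_image_of_injOn hinj]
            _ ≤ #((Finset.shadow H').filter (fun B => n ∉ B)) + #((Finset.shadow H').filter (fun B => n ∈ B)) :=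
                Nat.add_le_add (card_le_card hsub0) (card_le_card hsub1)
            _ = #(Finset.shadow H') := by
                rw [add_comm]
                exact card_filter_add_card_filter_not _
        -- recursion
        have ih0 : #H0 ≤ #(Finset.shadow H0) := ih r t H0 ht (by omega) hB0 hr0 hI0
        have ih1 : #H1 ≤ #(Finset.shadow H1) := ih (r-1) t H1 ht (by omega) hB1 hr1 hI1
        calc #H = #H' := hcard.symm
          _ = #H0 + #H1 := hsplit
          _ ≤ #(Finset.shadow H0) + #(Finset.shadow H1) := Nat.add_le_add ih0 ih1
          _ ≤ #(Finset.shadow H') := hshadsplit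
          _ ≤ #(Finset.shadow H) := hshad


noncomputable def upN (n : ℕ) (G : Finset (Finset ℕ)) : Finset (Finset ℕ) :=
  (Finset.shadow (G.image fun A => range n \ A)).image fun C => range n \ C

lemma sdiff_invol {n : ℕ} {A : Finset ℕ} (hA : A ⊆ range n) : range n \ (range n \ A) = A :=
  sdiff_sdiff_right_self.trans (inf_eq_right.2 hA)

lemma mem_upN_forward {n : ℕ} {G : Finset (Finset ℕ)} (hB : Bdd n G) {B : Finset ℕ}
    (h : B ∈ upN n G) : B ⊆ range n ∧ ∃ A ∈ G, A ⊆ B ∧ #B = #A + 1 := by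
  classical
  obtain ⟨C, hC, rfl⟩ := mem_image.1 h
  rw [mem_shadow_iff] at hC
  obtain ⟨D, hD, x, hx, rfl⟩ := hC
  obtain ⟨A, hA, rfl⟩ := mem_image.1 hD
  have hAr : A ⊆ range n := hB A hA
  have hxr : x ∈ range n := (mem_sdiff.1 hx).1
  have hxA : x ∉ A := (mem_sdiff.1 hx).2
  have key : range n \ ((range n \ A).erase x) = insert x A := by
    ext y
    simp only [mem_sdiff, mem_erase, mem_insert]
    constructor
    · rintro ⟨hyr, hy⟩
      by_cases hyx : y = x
      · exact Or.inl hyx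
      · by_cases hyA : y ∈ A
        · exact Or.inr hyA
        · exact absurd ⟨hyx, hyr, hyA⟩ hy
    · rintro (rfl | hyA)
      · exact ⟨hxr, fun hc => hc.1 rfl⟩
      · exact ⟨hAr hyA, fun hc => hc.2.2 hyA⟩
  rw [key]
  refine ⟨insert_subset (by exact hxr) hAr, A, hA, subset_insert _ _, card_insert_of_notMem hxA⟩

theorem upN_card_le {n a t : ℕ} {G : Finset (Finset ℕ)} (ht : 1 ≤ t) (h2a : 2 * a + 1 ≤ n + t)
    (hB : Bdd n G) (ha : Szd a G) (hI : Inter t G) : #G ≤ #(upN n G) := by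
  classical
  rcases G.eq_empty_or_nonempty with rfl | ⟨A₀, hA₀⟩
  · simp [upN]
  have han : a ≤ n := by
    have := card_le_card (hB A₀ hA₀)
    rwa [ha A₀ hA₀, card_range] at this
  set Gc := G.image fun A => range n \ A with hGc
  have hinjc : ∀ {s : Finset (Finset ℕ)}, (∀ A ∈ s, A ⊆ range n) →
      Set.InjOn (fun A : Finset ℕ => range n \ A) ↑s := by
    intro s hs A hA B hBm hAB
    simp only at hAB
    rw [← sdiff_invol (hs A hA), hAB, sdiff_invol (hs B hBm)]
  have hcGc : #Gc = #G := card_image_of_injOn (hinjc hB)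
  have hBGc : Bdd n Gc := by
    intro C hC
    obtain ⟨A, _, rfl⟩ := mem_image.1 hC
    exact sdiff_subset
  have hSGc : Szd (n - a) Gc := by
    intro C hC
    obtain ⟨A, hA, rfl⟩ := mem_image.1 hC
    rw [card_sdiff_of_subset (hB A hA), card_range, ha A hA]
  have hIGc : Inter (n + t - 2 * a) Gc := by
    intro C1 h1 C2 h2
    obtain ⟨A, hA, rfl⟩ := mem_image.1 h1
    obtain ⟨B, hBm, rfl⟩ := mem_image.1 h2
    have hU : (range n \ A) ∩ (range n \ B) = range n \ (A ∪ B) := by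
      ext y; simp only [mem_sdiff, mem_inter, mem_union]; tauto
    rw [hU, card_sdiff_of_subset (union_subset (hB A hA) (hB B hBm)), card_range]
    have h1' : #(A ∪ B) + #(A ∩ B) = #A + #B := card_union_add_card_inter A B
    have h2' : t ≤ #(A ∩ B) := hI A hA B hBm
    have h3' : #(A ∪ B) ≤ n := by
      have := card_le_card (union_subset (hB A hA) (hB B hBm))
      rwa [card_range] at this
    have := ha A hA; have := ha B hBm
    omega
  have hkat : #Gc ≤ #(Finset.shadow Gc) :=
    katona_shadow n (n - a) (n + t - 2*a) Gc (by omega) (by omega) hBGc hSGc hIGc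
  have hfinal : #(upN n G) = #(Finset.shadow Gc) := by
    rw [upN, ← hGc]
    apply card_image_of_injOn
    apply hinjc
    intro C hC
    rw [mem_shadow_iff] at hC
    obtain ⟨D, hD, x, hx, rfl⟩ := hC
    exact (erase_subset _ _).trans (hBGc D hD)
  omega

lemma milner_high (n m : ℕ) (hm : n + 1 ≤ 2 * m) :
    ∀ (i : ℕ) (F : Finset (Finset ℕ)), Bdd n F →
    (∀ A ∈ F, ∀ B ∈ F, A ⊆ B → A = B) → (∀ A ∈ F, m ≤ #A ∧ #A ≤ m + i) →
    F.card ≤ n.choose m := by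
  intro i
  induction i with
  | zero =>
    intro F hB hanti hsz
    have : F ⊆ powersetCard m (range n) := by
      intro A hA
      rw [mem_powersetCard]
      exact ⟨hB A hA, by have := hsz A hA; omega⟩
    calc #F ≤ #(powersetCard m (range n)) := card_le_card this
      _ = n.choose m := by rw [card_powersetCard, card_range]
  | succ i ih =>
    intro F hB hanti hsz
    set G := F.filter (fun A => #A = m + i + 1) with hG
    rcases G.eq_empty_or_nonempty with hGe | hGne
    · apply ih F hB hanti
      intro A hA
      have h1 := hsz A hA
      have h2 : A ∉ G := by rw [hGe]; exact notMem_empty A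
      rw [hG, mem_filter] at h2
      push_neg at h2
      have := h2 hA
      omega
    have hGB : Bdd n G := fun A hA => hB A (mem_filter.1 hA).1
    have hGS : Szd (m + i + 1) G := fun A hA => (mem_filter.1 hA).2
    have hGshad : #G ≤ #(Finset.shadow G) := localLYM hGB hGS (by omega)
    have hshadsz : Szd (m + i) (Finset.shadow G) := by
      intro B hBm
      have h := Set.Sized.shadow (fun A hA => hGS A hA) hBm
      simp only [Nat.add_sub_cancel] at h
      exact h
    have hdisj : Disjoint (F \ G) (Finset.shadow G) := by
      rw [disjoint_left]
      intro B hBF hBs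
      rw [mem_sdiff] at hBF
      obtain ⟨A, hA, hBsub⟩ := exists_subset_of_mem_shadow hBs
      have hAF : A ∈ F := (mem_filter.1 hA).1
      have := hanti B hBF.1 A hAF hBsub
      subst this
      have h1 := hshadsz B hBs
      have h2 := hGS B hA
      omega
    set F' := (F \ G) ∪ Finset.shadow G with hF'
    have hcard : #F ≤ #F' := by
      have h1 : #F = #(F \ G) + #G := by
        rw [card_sdiff_add_card_eq_card (filter_subset _ F)]
      rw [hF', card_union_of_disjoint hdisj]
      omega
    have hB' : Bdd n F' := by
      intro A hA
      rcases mem_union.1 hA with h | h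
      · exact hB A (mem_sdiff.1 h).1
      · obtain ⟨A', hA', hsub⟩ := exists_subset_of_mem_shadow h
        exact hsub.trans (hGB A' hA')
    have hanti' : ∀ A ∈ F', ∀ B ∈ F', A ⊆ B → A = B := by
      intro A hA B hBm hsub
      rcases mem_union.1 hA with hA1 | hA2 <;> rcases mem_union.1 hBm with hB1 | hB2
      · exact hanti A (mem_sdiff.1 hA1).1 B (mem_sdiff.1 hB1).1 hsub
      · -- A ∈ F\G, B ∈ ∂G : A ⊆ B ⊂ C with C ∈ G, contradiction with antichain
        exfalso
        obtain ⟨C, hC, x, hx, rfl⟩ := mem_shadow_iff.1 hB2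
        have hCF : C ∈ F := (mem_filter.1 hC).1
        have hAF : A ∈ F := (mem_sdiff.1 hA1).1
        have hAC : A ⊆ C := hsub.trans (erase_subset _ _)
        have hEq := hanti A hAF C hCF hAC
        have h2 : A ∉ G := (mem_sdiff.1 hA1).2
        rw [hG, mem_filter] at h2
        push_neg at h2
        have h3 := h2 hAF
        rw [hEq] at h3
        exact h3 (hGS C hC)
      · -- A ∈ ∂G, B ∈ F\G : #B ≤ m + i = #A
        apply eq_of_subset_of_card_le hsub
        have h1 := hshadsz A hA2
        have h2 : B ∉ G := (mem_sdiff.1 hB1).2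
        have hBF : B ∈ F := (mem_sdiff.1 hB1).1
        rw [hG, mem_filter] at h2
        push_neg at h2
        have h3 := h2 hBF
        have h4 := hsz B hBF
        omega
      · apply eq_of_subset_of_card_le hsub
        rw [hshadsz A hA2, hshadsz B hB2]
    have hsz' : ∀ A ∈ F', m ≤ #A ∧ #A ≤ m + i := by
      intro A hA
      rcases mem_union.1 hA with h | h
      · have h1 := hsz A (mem_sdiff.1 h).1
        have h2 : A ∉ G := (mem_sdiff.1 h).2
        rw [hG, mem_filter] at h2
        push_neg at h2
        have := h2 (mem_sdiff.1 h).1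
        omega
      · have := hshadsz A h
        omega
    exact hcard.trans (ih F' hB' hanti' hsz')

lemma milner_low (n t m : ℕ) (ht : 1 ≤ t) (hm1 : n + 1 ≤ 2 * m) (hm2 : 2 * m ≤ n + t + 1) :
    ∀ (j : ℕ) (F : Finset (Finset ℕ)), Bdd n F →
    (∀ A ∈ F, ∀ B ∈ F, A ⊆ B → A = B) → Inter t F → (∀ A ∈ F, m ≤ #A + j) →
    F.card ≤ n.choose m := by
  intro j
  induction j with
  | zero =>
    intro F hB hanti hI hsz
    apply milner_high n m hm1 (n - m) F hB hanti
    intro A hA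
    have h1 := hsz A hA
    have h2 : #A ≤ n := by
      have := card_le_card (hB A hA)
      rwa [card_range] at this
    omega
  | succ j ih =>
    intro F hB hanti hI hsz
    set G := F.filter (fun A => #A + (j+1) = m) with hG
    rcases G.eq_empty_or_nonempty with hGe | hGne
    · apply ih F hB hanti hI
      intro A hA
      have h1 := hsz A hA
      have h2 : A ∉ G := by rw [hGe]; exact notMem_empty A
      rw [hG, mem_filter] at h2
      push_neg at h2
      have := h2 hA
      omega
    have hGB : Bdd n G := fun A hA => hB A (mem_filter.1 hA).1
    have hGS : Szd (m - (j+1)) G := by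
      intro A hA
      have := (mem_filter.1 hA).2
      omega
    have hGI : Inter t G := fun A hA B hBm =>
      hI A (mem_filter.1 hA).1 B (mem_filter.1 hBm).1
    have hmj : m - (j+1) + (j+1) = m := by
      obtain ⟨A₀, hA₀⟩ := hGne
      have := (mem_filter.1 hA₀).2
      omega
    have h2a : 2 * (m - (j+1)) + 1 ≤ n + t := by omega
    have hGup : #G ≤ #(upN n G) :=
      upN_card_le ht h2a hGB hGS hGI
    have hupmem : ∀ B ∈ upN n G, B ⊆ range n ∧ ∃ A ∈ G, A ⊆ B ∧ #B = #A + 1 :=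
      fun B hBm => mem_upN_forward hGB hBm
    have hupsz : ∀ B ∈ upN n G, #B + j = m := by
      intro B hBm
      obtain ⟨_, A, hA, _, hc⟩ := hupmem B hBm
      have := hGS A hA
      omega
    have hdisj : Disjoint (F \ G) (upN n G) := by
      rw [disjoint_left]
      intro B hBF hBup
      obtain ⟨_, A, hA, hsub, hc⟩ := hupmem B hBup
      have hAF : A ∈ F := (mem_filter.1 hA).1
      have hEq := hanti A hAF B (mem_sdiff.1 hBF).1 hsub
      rw [hEq] at hc
      omega
    set F' := (F \ G) ∪ upN n G with hF'
    have hcard : #F ≤ #F' := by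
      have h1 : #F = #(F \ G) + #G := by
        rw [card_sdiff_add_card_eq_card (filter_subset _ F)]
      rw [hF', card_union_of_disjoint hdisj]
      omega
    have hB' : Bdd n F' := by
      intro A hA
      rcases mem_union.1 hA with h | h
      · exact hB A (mem_sdiff.1 h).1
      · exact (hupmem A h).1
    have hnotG : ∀ A, A ∈ F \ G → m ≤ #A + j := by
      intro A h
      have h1 := hsz A (mem_sdiff.1 h).1
      have h2 : A ∉ G := (mem_sdiff.1 h).2
      rw [hG, mem_filter] at h2
      push_neg at h2
      have := h2 (mem_sdiff.1 h).1
      omega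
    have hanti' : ∀ A ∈ F', ∀ B ∈ F', A ⊆ B → A = B := by
      intro A hA B hBm hsub
      rcases mem_union.1 hA with hA1 | hA2 <;> rcases mem_union.1 hBm with hB1 | hB2
      · exact hanti A (mem_sdiff.1 hA1).1 B (mem_sdiff.1 hB1).1 hsub
      · -- A ∈ F\G, B ∈ upN : #A ≥ m - j = #B
        apply eq_of_subset_of_card_le hsub
        have h1 := hupsz B hB2
        have h2 := hnotG A hA1
        omega
      · -- A ∈ upN, B ∈ F\G : C ⊆ A ⊆ B with C ∈ G
        exfalso
        obtain ⟨_, C, hC, hCA, hc⟩ := hupmem A hA2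
        have hCF : C ∈ F := (mem_filter.1 hC).1
        have hBF : B ∈ F := (mem_sdiff.1 hB1).1
        have hEq := hanti C hCF B hBF (hCA.trans hsub)
        have h1 := hnotG B hB1
        have h2 := (mem_filter.1 hC).2
        rw [hEq] at h2
        omega
      · apply eq_of_subset_of_card_le hsub
        have h1 := hupsz A hA2
        have h2 := hupsz B hB2
        omega
    have hI' : Inter t F' := by
      have hup_lower : ∀ B ∈ upN n G, ∃ A ∈ F, A ⊆ B := by
        intro B hBm
        obtain ⟨_, A, hA, hsub, _⟩ := hupmem B hBm
        exact ⟨A, (mem_filter.1 hA).1, hsub⟩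
      intro A hA B hBm
      have hAex : ∃ A' ∈ F, A' ⊆ A := by
        rcases mem_union.1 hA with h | h
        · exact ⟨A, (mem_sdiff.1 h).1, Subset.rfl⟩
        · exact hup_lower A h
      have hBex : ∃ B' ∈ F, B' ⊆ B := by
        rcases mem_union.1 hBm with h | h
        · exact ⟨B, (mem_sdiff.1 h).1, Subset.rfl⟩
        · exact hup_lower B h
      obtain ⟨A', hA', hAs⟩ := hAex
      obtain ⟨B', hB', hBs⟩ := hBex
      calc t ≤ #(A' ∩ B') := hI A' hA' B' hB'
        _ ≤ #(A ∩ B) := card_le_card (inter_subset_inter hAs hBs)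
    have hsz' : ∀ A ∈ F', m ≤ #A + j := by
      intro A hA
      rcases mem_union.1 hA with h | h
      · exact hnotG A h
      · have := hupsz A h; omega
    exact hcard.trans (ih F' hB' hanti' hI' hsz')

theorem milner (n t : ℕ) (ht : 1 ≤ t) (F : Finset (Finset ℕ)) (hB : Bdd n F)
    (hanti : ∀ A ∈ F, ∀ B ∈ F, A ⊆ B → A = B) (hI : Inter t F) :
    F.card ≤ n.choose ((n + t + 1) / 2) := by
  by_cases htn : t ≤ n
  · apply milner_low n t ((n+t+1)/2) ht (by omega) (by omega) ((n+t+1)/2) F hB hanti hI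
    intro A hA
    omega
  · have : F = ∅ := by
      rw [eq_empty_iff_forall_notMem]
      intro A hA
      have h1 := hI A hA A hA
      rw [inter_self] at h1
      have h2 : #A ≤ n := by
        have := card_le_card (hB A hA)
        rwa [card_range] at this
      omega
    rw [this]
    simp


theorem count_bound (n k : ℕ) (hk : 1 ≤ k) (b : ℕ → ℝ) (t : ℝ)
    (hb0 : ∀ i < n, b i ≠ 0) (hb1 : ∀ i < n, |b i| ≤ 1) (ht : (k : ℝ) - 1 < t) :
    #(Finset.univ.filter (fun σ : Fin n → Bool =>
        (∑ i : Fin n, (if σ i then b i.val else - b i.val)) = t))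
      ≤ n.choose ((n + k + 1) / 2) := by
  classical
  set Sol := Finset.univ.filter (fun σ : Fin n → Bool =>
        (∑ i : Fin n, (if σ i then b i.val else - b i.val)) = t) with hSol
  set S : (Fin n → Bool) → Finset ℕ :=
    fun σ => (Finset.univ.filter (fun i : Fin n =>
      if σ i then 0 < b i.val else b i.val < 0)).image Fin.val with hS
  have hmemF : ∀ σ (i : Fin n), i.val ∈ S σ ↔ (if σ i then 0 < b i.val else b i.val < 0) := by
    intro σ i
    rw [hS]
    simp only [mem_image, mem_filter, mem_univ, true_and]
    constructor
    · rintro ⟨i', h, hval⟩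
      have : i' = i := Fin.ext hval
      subst this
      exact h
    · intro h
      exact ⟨i, h, rfl⟩
  have hSB : ∀ σ, S σ ⊆ range n := by
    intro σ j hj
    rw [hS] at hj
    obtain ⟨i, _, rfl⟩ := mem_image.1 hj
    exact mem_range.2 i.isLt
  set w : Finset ℕ → ℝ := fun A => ∑ j ∈ A, |b j| with hw
  set W : ℝ := w (range n) with hW
  -- the weight identity for solutions
  have hident : ∀ σ ∈ Sol, 2 * w (S σ) - W = t := by
    intro σ hσ
    rw [hSol, mem_filter] at hσ
    have heq : ∀ i : Fin n, (if σ i then b i.val else - b i.val)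
        = (if i.val ∈ S σ then |b i.val| else - |b i.val|) := by
      intro i
      have hbne : b i.val ≠ 0 := hb0 i.val i.isLt
      have hmem := hmemF σ i
      by_cases hσi : σ i
      · simp only [hσi, if_true] at hmem ⊢
        by_cases hpos : 0 < b i.val
        · rw [if_pos (hmem.2 hpos), abs_of_pos hpos]
        · have hneg : b i.val < 0 := lt_of_le_of_ne (not_lt.1 hpos) hbne
          rw [if_neg (fun hc => hpos (hmem.1 hc)), abs_of_neg hneg, neg_neg]
      · simp only [hσi, Bool.not_eq_true, Bool.false_eq_true, if_false] at hmem ⊢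
        by_cases hneg : b i.val < 0
        · rw [if_pos (hmem.2 hneg), abs_of_neg hneg]
        · have hpos : 0 < b i.val := lt_of_le_of_ne (not_lt.1 hneg) (Ne.symm hbne)
          rw [if_neg (fun hc => hneg (hmem.1 hc)), abs_of_pos hpos]
    have h1 : (∑ i : Fin n, (if σ i then b i.val else - b i.val))
        = ∑ j ∈ range n, (if j ∈ S σ then |b j| else - |b j|) := by
      rw [Finset.sum_congr rfl (fun i _ => heq i)]
      exact Fin.sum_univ_eq_sum_range (fun j => if j ∈ S σ then |b j| else - |b j|) n
    have h2 : ∑ j ∈ range n, (if j ∈ S σ then |b j| else - |b j|)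
        = 2 * w (S σ) - W := by
      have e1 : ∑ j ∈ range n \ S σ, (if j ∈ S σ then |b j| else - |b j|)
          = - ∑ j ∈ range n \ S σ, |b j| := by
        rw [← Finset.sum_neg_distrib]
        exact Finset.sum_congr rfl (fun j hj => if_neg (mem_sdiff.1 hj).2)
      have e2 : ∑ j ∈ S σ, (if j ∈ S σ then |b j| else - |b j|) = ∑ j ∈ S σ, |b j| :=
        Finset.sum_congr rfl (fun j hj => if_pos hj)
      have e3 : ∑ j ∈ range n, |b j| = ∑ j ∈ range n \ S σ, |b j| + ∑ j ∈ S σ, |b j| :=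
        (Finset.sum_sdiff (hSB σ)).symm
      rw [← Finset.sum_sdiff (hSB σ), e1, e2, hW, hw]
      simp only
      rw [e3]
      ring
    rw [← hσ.2, h1, h2]
  -- injectivity of S on solutions
  have hSinj : Set.InjOn S ↑Sol := by
    intro σ _ τ _ hST
    funext i
    have hbne : b i.val ≠ 0 := hb0 i.val i.isLt
    have hmemσ := hmemF σ i
    have hmemτ := hmemF τ i
    rw [hST] at hmemσ
    by_cases hσi : σ i <;> by_cases hτi : τ i
    · rw [hσi, hτi]
    · exfalso
      simp only [hσi, hτi, Bool.not_eq_true, Bool.false_eq_true, if_true, if_false]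
        at hmemσ hmemτ
      rcases hbne.lt_or_gt with h | h
      · have := hmemσ.1 (hmemτ.2 h); linarith
      · have := hmemτ.1 (hmemσ.2 h); linarith
    · exfalso
      simp only [hσi, hτi, Bool.not_eq_true, Bool.false_eq_true, if_true, if_false]
        at hmemσ hmemτ
      rcases hbne.lt_or_gt with h | h
      · have := hmemτ.1 (hmemσ.2 h); linarith
      · have := hmemσ.1 (hmemτ.2 h); linarith
    · rw [Bool.not_eq_true] at hσi hτi
      rw [hσi, hτi]
  set F := Sol.image S with hF
  have hcardF : #Sol = #F := (card_image_of_injOn hSinj).symm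
  -- weights of members are equal
  have hweq : ∀ A ∈ F, 2 * w A - W = t := by
    intro A hA
    obtain ⟨σ, hσ, rfl⟩ := mem_image.1 hA
    exact hident σ hσ
  have hBddF : Bdd n F := by
    intro A hA
    obtain ⟨σ, _, rfl⟩ := mem_image.1 hA
    exact hSB σ
  have hpos : ∀ j ∈ range n, 0 < |b j| := fun j hj => abs_pos.2 (hb0 j (mem_range.1 hj))
  have hantiF : ∀ A ∈ F, ∀ B ∈ F, A ⊆ B → A = B := by
    intro A hA B hB hsub
    have h1 := hweq A hA
    have h2 := hweq B hB
    have hwAB : w A = w B := by linarith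
    have h3 : w B = w (B \ A) + w A := (Finset.sum_sdiff hsub).symm
    have h4 : w (B \ A) = 0 := by linarith
    have h5 : B \ A = ∅ := by
      by_contra hne
      obtain ⟨j, hj⟩ := nonempty_iff_ne_empty.2 hne
      have : 0 < w (B \ A) := Finset.sum_pos
        (fun j' hj' => hpos j' (hBddF B hB (mem_sdiff.1 hj').1)) ⟨j, hj⟩
      linarith
    exact Subset.antisymm hsub (sdiff_eq_empty_iff_subset.1 h5)
  have hIF : Inter k F := by
    intro A hA B hB
    have h1 := hweq A hA
    have h2 := hweq B hB
    have h3 : w (A ∪ B) + w (A ∩ B) = w A + w B := Finset.sum_union_inter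
    have h4 : w (A ∪ B) ≤ W := by
      apply Finset.sum_le_sum_of_subset_of_nonneg
        (union_subset (hBddF A hA) (hBddF B hB))
      intro j _ _
      exact abs_nonneg _
    have h5 : t ≤ w (A ∩ B) := by linarith
    have h6 : w (A ∩ B) ≤ #(A ∩ B) := by
      calc w (A ∩ B) ≤ ∑ _j ∈ A ∩ B, (1:ℝ) := by
            apply Finset.sum_le_sum
            intro j hj
            exact hb1 j (mem_range.1 (hBddF A hA (mem_inter.1 hj).1))
        _ = #(A ∩ B) := by simp
    have h7 : (k : ℝ) - 1 < #(A ∩ B) := by linarith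
    have h8 : (k : ℝ) < #(A ∩ B) + 1 := by linarith
    exact_mod_cast Nat.lt_add_one_iff.1 (by exact_mod_cast h8)
  rw [hcardF]
  exact milner n k hk F hBddF hantiF hIF


lemma interior_union_empty {X : Type*} [TopologicalSpace X] {s t : Set X}
    (hs : IsClosed s) (hsi : interior s = ∅) (hti : interior t = ∅) :
    interior (s ∪ t) = ∅ := by
  have h1 : interior (s ∪ t) \ s ⊆ interior t := by
    apply interior_maximal
    · intro y hy
      rcases (interior_subset hy.1) with h | h
      · exact absurd h hy.2
      · exact h
    · exact isOpen_interior.sdiff hs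
  rw [hti, Set.subset_empty_iff, Set.diff_eq_empty] at h1
  have h2 : interior (s ∪ t) ⊆ interior s := interior_maximal h1 isOpen_interior
  rw [hsi, Set.subset_empty_iff] at h2
  exact h2

lemma interior_biUnion_empty {X : Type*} [TopologicalSpace X] (C : ℕ → Set X) :
    ∀ n : ℕ, (∀ i < n, IsClosed (C i)) → (∀ i < n, interior (C i) = ∅) →
    interior (⋃ i ∈ Finset.range n, C i) = ∅ := by
  intro n
  induction n with
  | zero => intro _ _; simp
  | succ n ih =>
    intro hcl hint
    have : ⋃ i ∈ Finset.range (n+1), C i = C n ∪ ⋃ i ∈ Finset.range n, C i := by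
      rw [Finset.range_add_one]
      simp [Set.biUnion_insert]
    rw [this]
    exact interior_union_empty (hcl n (Nat.lt_succ_self n)) (hint n (Nat.lt_succ_self n))
      (ih (fun i hi => hcl i (by omega)) (fun i hi => hint i (by omega)))

theorem exists_direction (d n : ℕ) (v : ℕ → EuclideanSpace ℝ (Fin d))
    (hv0 : ∀ i < n, v i ≠ 0) (x : EuclideanSpace ℝ (Fin d)) (hx : x ≠ 0) (c : ℝ)
    (hcx : c < ‖x‖) :
    ∃ u : EuclideanSpace ℝ (Fin d), ‖u‖ = 1 ∧ (∀ i < n, ⟪v i, u⟫ ≠ 0) ∧ c < ⟪x, u⟫ := by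
  classical
  set K : ℕ → Set (EuclideanSpace ℝ (Fin d)) :=
    fun i => ((((ℝ ∙ (v i))ᗮ : Submodule ℝ (EuclideanSpace ℝ (Fin d)))) : Set (EuclideanSpace ℝ (Fin d))) with hK
  have hKcl : ∀ i, IsClosed (K i) := fun i => Submodule.isClosed_orthogonal _
  have hKint : ∀ i < n, interior (K i) = ∅ := by
    intro i hi
    by_contra hne
    have hne' : (interior (K i)).Nonempty := Set.nonempty_iff_ne_empty.2 hne
    have htop : (ℝ ∙ (v i))ᗮ = (⊤ : Submodule ℝ (EuclideanSpace ℝ (Fin d))) :=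
      Submodule.eq_top_of_nonempty_interior' _ hne'
    have : v i ∈ (ℝ ∙ (v i))ᗮ := by rw [htop]; trivial
    rw [Submodule.mem_orthogonal_singleton_iff_inner_right, inner_self_eq_zero] at this
    exact hv0 i hi this
  set G : Set (EuclideanSpace ℝ (Fin d)) := {u | c * ‖u‖ < ⟪x, u⟫} with hG
  have hGopen : IsOpen G := by
    apply isOpen_lt
    · exact continuous_const.mul continuous_norm
    · exact (innerSL ℝ x).continuous
  have hx0 : (‖x‖⁻¹ • x) ∈ G := by
    rw [hG, Set.mem_setOf_eq]
    have hnx : 0 < ‖x‖ := norm_pos_iff.2 hx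
    rw [norm_smul, real_inner_smul_right, real_inner_self_eq_norm_sq]
    rw [norm_inv, norm_norm]
    have : ‖x‖⁻¹ * ‖x‖ = 1 := inv_mul_cancel₀ (ne_of_gt hnx)
    rw [this, mul_one]
    calc c < ‖x‖ := hcx
      _ = ‖x‖⁻¹ * ‖x‖ ^ 2 := by field_simp
  have hnotsub : ¬ (G ⊆ ⋃ i ∈ Finset.range n, K i) := by
    intro hsub
    have : (‖x‖⁻¹ • x) ∈ interior (⋃ i ∈ Finset.range n, K i) :=
      interior_maximal hsub hGopen hx0
    rw [interior_biUnion_empty K n (fun i _ => hKcl i) hKint] at this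
    exact this
  rw [Set.not_subset] at hnotsub
  obtain ⟨u, huG, huK⟩ := hnotsub
  rw [hG, Set.mem_setOf_eq] at huG
  have hune : u ≠ 0 := by
    intro h
    rw [h] at huG
    simp at huG
  have hnu : 0 < ‖u‖ := norm_pos_iff.2 hune
  refine ⟨‖u‖⁻¹ • u, ?_, ?_, ?_⟩
  · rw [norm_smul, norm_inv, norm_norm, inv_mul_cancel₀ (ne_of_gt hnu)]
  · intro i hi hzero
    apply huK
    rw [Set.mem_iUnion₂]
    refine ⟨i, Finset.mem_range.2 hi, ?_⟩
    rw [hK]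
    rw [real_inner_smul_right] at hzero
    have : ⟪v i, u⟫ = 0 := by
      rcases mul_eq_zero.1 hzero with h | h
      · exact absurd h (inv_ne_zero (ne_of_gt hnu))
      · exact h
    simpa [Submodule.mem_orthogonal_singleton_iff_inner_right] using this
  · rw [real_inner_smul_right]
    have h1 : c * ‖u‖ < ⟪x, u⟫ := huG
    have h2 : 0 < ‖u‖⁻¹ := inv_pos.2 hnu
    calc c = ‖u‖⁻¹ * (c * ‖u‖) := by field_simp
      _ < ‖u‖⁻¹ * ⟪x, u⟫ := by exact mul_lt_mul_of_pos_left h1 h2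


lemma ceil_half (m : ℕ) : ⌈((m : ℚ)) / 2⌉₊ = (m + 1) / 2 := by
  rcases Nat.eq_zero_or_pos m with rfl | hmpos
  · simp
  have hppos : (m + 1) / 2 ≠ 0 := by omega
  rw [Nat.ceil_eq_iff hppos]
  constructor
  · rw [lt_div_iff₀ (by norm_num : (0:ℚ) < 2)]
    have h2 : (((m + 1) / 2 - 1 : ℕ) : ℚ) * 2 = ((2 * ((m + 1) / 2 - 1) : ℕ) : ℚ) := by
      push_cast; ring
    rw [h2]
    exact_mod_cast (by omega : 2 * ((m + 1) / 2 - 1) < m)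
  · rw [div_le_iff₀ (by norm_num : (0:ℚ) < 2)]
    have h2 : (((m + 1) / 2 : ℕ) : ℚ) * 2 = ((2 * ((m + 1) / 2) : ℕ) : ℚ) := by
      push_cast; ring
    rw [h2]
    exact_mod_cast (by omega : m ≤ 2 * ((m + 1) / 2))

lemma ceil_index (n k : ℕ) : ⌈((n : ℚ) + (k : ℕ)) / 2⌉₊ = (n + k + 1) / 2 := by
  have h : ((n : ℚ) + (k : ℕ)) = ((n + k : ℕ) : ℚ) := by push_cast; ring
  rw [h, ceil_half]


end LO

theorem littlewood_offord_nonuniform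
    {Ω : Type*} [MeasurableSpace Ω] (μ : Measure Ω) [IsProbabilityMeasure μ]
    (d n : ℕ) (v : ℕ → EuclideanSpace ℝ (Fin d))
    (hv0 : ∀ i < n, v i ≠ 0) (hv1 : ∀ i < n, ‖v i‖ ≤ 1)
    (ε : ℕ → Ω → ℝ) (hmeas : ∀ i, Measurable (ε i))
    (hindep : iIndepFun ε μ)
    (hrad : ∀ i, IsRademacher μ (ε i))
    (x : EuclideanSpace ℝ (Fin d)) (hx : x ≠ 0) :
    μ {ω | ∑ i ∈ Finset.range n, ε i ω • v i = x}
      ≤ (n.choose ⌈((n : ℚ) + ⌈‖x‖⌉₊) / 2⌉₊ : ENNReal) / 2 ^ n := by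
  classical
  set k := ⌈‖x‖⌉₊ with hkdef
  have hk1 : 1 ≤ k := Nat.ceil_pos.2 (norm_pos_iff.2 hx)
  have hceil1 : ((k : ℝ)) - 1 < ‖x‖ := by
    have h := Nat.ceil_lt_add_one (norm_nonneg x)
    have h2 : ((k : ℕ) : ℝ) < ‖x‖ + 1 := by rw [hkdef]; exact_mod_cast h
    linarith
  obtain ⟨u, hu1, hu0, hut⟩ := LO.exists_direction d n v hv0 x hx ((k:ℝ) - 1) hceil1
  set b : ℕ → ℝ := fun j => ⟪v j, u⟫ with hb
  set t : ℝ := ⟪x, u⟫ with htdef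
  have hb0 : ∀ i < n, b i ≠ 0 := hu0
  have hb1 : ∀ i < n, |b i| ≤ 1 := by
    intro i hi
    calc |b i| ≤ ‖v i‖ * ‖u‖ := abs_real_inner_le_norm _ _
      _ ≤ 1 := by rw [hu1, mul_one]; exact hv1 i hi
  have ht : (k:ℝ) - 1 < t := hut
  set Sol := Finset.univ.filter (fun σ : Fin n → Bool =>
        (∑ i : Fin n, (if σ i then b i.val else - b i.val)) = t) with hSol
  set sg : (Fin n → Bool) → ℕ → ℝ :=
    fun σ j => if h : j < n then (if σ ⟨j, h⟩ then 1 else -1) else 1 with hsg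
  set Ev : (Fin n → Bool) → Set Ω :=
    fun σ => ⋂ i ∈ Finset.range n, ε i ⁻¹' ({sg σ i} : Set ℝ) with hEv
  set N : Set Ω :=
    ⋃ i ∈ Finset.range n, (ε i ⁻¹' ({1} : Set ℝ) ∪ ε i ⁻¹' ({-1} : Set ℝ))ᶜ with hN
  have hincl : {ω | ∑ i ∈ Finset.range n, ε i ω • v i = x} ⊆ N ∪ ⋃ σ ∈ Sol, Ev σ := by
    intro ω hω
    rw [Set.mem_setOf_eq] at hω
    by_cases hωN : ω ∈ N
    · exact Or.inl hωN
    right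
    have hpm : ∀ i < n, ε i ω = 1 ∨ ε i ω = -1 := by
      intro i hi
      by_contra hcon
      push_neg at hcon
      apply hωN
      rw [hN, Set.mem_iUnion₂]
      refine ⟨i, Finset.mem_range.2 hi, ?_⟩
      simp only [Set.mem_compl_iff, Set.mem_union, Set.mem_preimage, Set.mem_singleton_iff]
      push_neg
      exact hcon
    set σ : Fin n → Bool := fun i => if ε i.val ω = 1 then true else false with hσ
    have hεσ : ∀ i ∈ Finset.range n, ε i ω = sg σ i := by
      intro i hi
      have hi' := Finset.mem_range.1 hi
      rw [hsg]
      simp only [dif_pos hi']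
      rcases hpm i hi' with h1 | h1
      · rw [hσ]
        simp only [h1, if_pos]
      · rw [hσ]
        simp only [h1]
        norm_num
    have hsum : ∑ i ∈ Finset.range n, (ε i ω) * b i = t := by
      have hlin : ⟪∑ i ∈ Finset.range n, ε i ω • v i, u⟫
          = ∑ i ∈ Finset.range n, ε i ω * b i := by
        rw [sum_inner]
        exact Finset.sum_congr rfl fun i _ => real_inner_smul_left _ _ _
      rw [hω] at hlin
      rw [← hlin, htdef]
    have hσSol : σ ∈ Sol := by
      rw [hSol, Finset.mem_filter]
      refine ⟨Finset.mem_univ σ, ?_⟩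
      have e1 : ∀ i : Fin n, (if σ i then b i.val else - b i.val) = sg σ i.val * b i.val := by
        intro i
        rw [hsg]
        simp only [dif_pos i.isLt, Fin.eta]
        by_cases hσi : σ i
        · simp [hσi]
        · simp [hσi]
      rw [Finset.sum_congr rfl (fun i _ => e1 i),
        Fin.sum_univ_eq_sum_range (fun j => sg σ j * b j) n]
      rw [← hsum]
      exact Finset.sum_congr rfl fun i hi => by rw [hεσ i hi]
    rw [Set.mem_iUnion₂]
    refine ⟨σ, hσSol, ?_⟩
    rw [hEv]
    simp only [Set.mem_iInter, Set.mem_preimage, Set.mem_singleton_iff]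
    intro i hi
    exact hεσ i hi
  have hEvMeas : ∀ σ, μ (Ev σ) = (1/2 : ENNReal)^n := by
    intro σ
    rw [hEv]
    have hprod := hindep.measure_inter_preimage_eq_mul (Finset.range n)
      (sets := fun i => ({sg σ i} : Set ℝ)) (fun i _ => measurableSet_singleton _)
    rw [hprod]
    have heach : ∀ i ∈ Finset.range n, μ (ε i ⁻¹' ({sg σ i} : Set ℝ)) = 1/2 := by
      intro i hi
      have hi' := Finset.mem_range.1 hi
      rw [hsg]
      simp only [dif_pos hi']
      by_cases hσi : σ ⟨i, hi'⟩
      · simp only [hσi, if_true]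
        have h1 := (hrad i).1
        have hpre : ε i ⁻¹' ({(1:ℝ)} : Set ℝ) = {ω | ε i ω = 1} := rfl
        rw [hpre]
        exact h1
      · simp only [hσi, Bool.not_eq_true, Bool.false_eq_true, if_false]
        have h1 := (hrad i).2
        have hpre : ε i ⁻¹' ({(-1:ℝ)} : Set ℝ) = {ω | ε i ω = -1} := rfl
        rw [hpre]
        exact h1
    rw [Finset.prod_congr rfl heach, Finset.prod_const, Finset.card_range]
  have hNzero : μ N = 0 := by
    rw [hN]
    refine le_antisymm ?_ (zero_le)
    refine le_trans (measure_biUnion_finset_le _ _) ?_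
    refine le_of_eq (Finset.sum_eq_zero ?_)
    intro i _
    have hms : MeasurableSet (ε i ⁻¹' ({1} : Set ℝ) ∪ ε i ⁻¹' ({-1} : Set ℝ)) :=
      ((hmeas i) (measurableSet_singleton 1)).union ((hmeas i) (measurableSet_singleton (-1)))
    have hdisj : Disjoint (ε i ⁻¹' ({1} : Set ℝ)) (ε i ⁻¹' ({-1} : Set ℝ)) := by
      rw [Set.disjoint_left]
      intro ω h1 h2
      rw [Set.mem_preimage, Set.mem_singleton_iff] at h1 h2
      rw [h1] at h2
      norm_num at h2
    have hone : μ (ε i ⁻¹' ({1} : Set ℝ) ∪ ε i ⁻¹' ({-1} : Set ℝ)) = 1 := by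
      rw [measure_union hdisj ((hmeas i) (measurableSet_singleton (-1)))]
      have h1 : μ (ε i ⁻¹' ({(1:ℝ)} : Set ℝ)) = 1/2 := (hrad i).1
      have h2 : μ (ε i ⁻¹' ({(-1:ℝ)} : Set ℝ)) = 1/2 := (hrad i).2
      rw [h1, h2]
      rw [ENNReal.div_add_div_same, one_add_one_eq_two]
      exact ENNReal.div_self (by norm_num) (by norm_num)
    rw [prob_compl_eq_zero_iff hms]
    exact hone
  have hcount := LO.count_bound n k hk1 b t hb0 hb1 ht
  calc μ {ω | ∑ i ∈ Finset.range n, ε i ω • v i = x}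
      ≤ μ (N ∪ ⋃ σ ∈ Sol, Ev σ) := measure_mono hincl
    _ ≤ μ N + μ (⋃ σ ∈ Sol, Ev σ) := measure_union_le _ _
    _ = μ (⋃ σ ∈ Sol, Ev σ) := by rw [hNzero, zero_add]
    _ ≤ ∑ σ ∈ Sol, μ (Ev σ) := measure_biUnion_finset_le _ _
    _ = (#Sol : ENNReal) * (1/2 : ENNReal)^n := by
        rw [Finset.sum_congr rfl (fun σ _ => hEvMeas σ), Finset.sum_const, nsmul_eq_mul]
    _ ≤ (n.choose ((n + k + 1)/2) : ENNReal) * (1/2 : ENNReal)^n := by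
        apply mul_le_mul_left
        exact_mod_cast hcount
    _ = (n.choose ⌈((n : ℚ) + k) / 2⌉₊ : ENNReal) / 2 ^ n := by
        rw [LO.ceil_index n k]
        rw [one_div, ← ENNReal.inv_pow, ← div_eq_mul_inv]
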